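/- Completeness of the one-dimensional optimal system of the KdV equation: for every nonzero a = (a₁,a₂,a₃,a₄) ∈ ℝ⁴ there exist real ε₁, ε₂, ε₃, ε₄ and a nonzero real constant c such that c·(a·A(ε₁,ε₂,ε₃,ε₄)) is one of the six vectors (0,0,0,1), (0,1,1,0), (0,−1,1,0), (0,0,1,0), (0,1,0,0), (1,0,0,0), i.e. every one-dimensional subalgebra is equivalent (under the adjoint action combined with scaling) to one spanned by v₄, v₃+v₂, v₃−v₂, v₃, v₂, or v₁. -/

import Mathlib

open Real Matrix

/-- separate adjoint action matrix of v₁ -/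
noncomputable def A1 (e : ℝ) : Matrix (Fin 4) (Fin 4) ℝ :=
  !![1, 0, 0, 0;
     0, 1, 0, 0;
     0, 0, 1, 0;
     -e, 0, 0, 1]

/-- separate adjoint action matrix of v₂ -/
noncomputable def A2 (e : ℝ) : Matrix (Fin 4) (Fin 4) ℝ :=
  !![1, 0, 0, 0;
     0, 1, 0, 0;
     -e, 0, 1, 0;
     0, -3 * e, 0, 1]

/-- separate adjoint action matrix of v₃ -/
noncomputable def A3 (e : ℝ) : Matrix (Fin 4) (Fin 4) ℝ :=
  !![1, 0, 0, 0;
     e, 1, 0, 0;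
     0, 0, 1, 0;
     0, 0, 2 * e, 1]

/-- separate adjoint action matrix of v₄ -/
noncomputable def A4 (e : ℝ) : Matrix (Fin 4) (Fin 4) ℝ :=
  !![exp e, 0, 0, 0;
     0, exp (3 * e), 0, 0;
     0, 0, exp (-2 * e), 0;
     0, 0, 0, 1]

/-- the general adjoint transformation matrix of the KdV symmetry algebra -/
noncomputable def A (e1 e2 e3 e4 : ℝ) : Matrix (Fin 4) (Fin 4) ℝ :=
  A1 e1 * A2 e2 * A3 e3 * A4 e4

lemma vecMul_A (a : Fin 4 → ℝ) (e1 e2 e3 e4 : ℝ) :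
    Matrix.vecMul a (A e1 e2 e3 e4) =
      ![(a 0 - e1 * a 3 - e2 * a 2 + e3 * (a 1 - 3 * e2 * a 3)) * exp e4,
        (a 1 - 3 * e2 * a 3) * exp (3 * e4),
        (a 2 + 2 * e3 * a 3) * exp (-2 * e4),
        a 3] := by
  funext i
  fin_cases i <;>
    simp [A, A1, A2, A3, A4, Matrix.vecMul, Matrix.mul_apply, dotProduct,
      Fin.sum_univ_four, Matrix.vecHead, Matrix.vecTail] <;> ring

theorem kdv_optimal_system_completeness (a : Fin 4 → ℝ) (ha : a ≠ 0) :
    ∃ (e1 e2 e3 e4 c : ℝ), c ≠ 0 ∧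
      (c • Matrix.vecMul a (A e1 e2 e3 e4) = ![0, 0, 0, 1] ∨
       c • Matrix.vecMul a (A e1 e2 e3 e4) = ![0, 1, 1, 0] ∨
       c • Matrix.vecMul a (A e1 e2 e3 e4) = ![0, -1, 1, 0] ∨
       c • Matrix.vecMul a (A e1 e2 e3 e4) = ![0, 0, 1, 0] ∨
       c • Matrix.vecMul a (A e1 e2 e3 e4) = ![0, 1, 0, 0] ∨
       c • Matrix.vecMul a (A e1 e2 e3 e4) = ![1, 0, 0, 0]) := by
  rcases ne_or_eq (a 3) 0 with h3 | h3
  · -- a₄ ≠ 0 : reduce to v₄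
    set e2 : ℝ := a 1 / (3 * a 3) with he2
    set e3 : ℝ := -(a 2) / (2 * a 3) with he3
    refine ⟨(a 0 - e2 * a 2 + e3 * (a 1 - 3 * e2 * a 3)) / a 3, e2, e3, 0, 1 / a 3,
      one_div_ne_zero h3, Or.inl ?_⟩
    rw [vecMul_A]
    funext i
    fin_cases i <;>
      simp [he2, he3, Real.exp_zero] <;> field_simp <;> (try ring_nf) <;> (try tauto)
  · rcases ne_or_eq (a 2) 0 with h2 | h2
    · rcases ne_or_eq (a 1) 0 with h1 | h1
      · -- a₄ = 0, a₃ ≠ 0, a₂ ≠ 0 : reduce to v₃ ± v₂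
        rcases ne_or_eq (a 1 * a 2) 0 with hm | hm
        swap
        · exact absurd hm (mul_ne_zero h1 h2)
        rcases lt_or_gt_of_ne hm with hneg | hpos
        · -- opposite signs: target (0,-1,1,0)
          set e4 : ℝ := Real.log (-(a 2) / a 1) / 5 with he4
          have hr : 0 < -(a 2) / a 1 := by
            rcases mul_neg_iff.1 hneg with ⟨hp, hq⟩ | ⟨hp, hq⟩
            · exact div_pos (by linarith) hp
            · exact div_pos_of_neg_of_neg (by linarith) hp
          have key : exp (2 * e4) * exp (3 * e4) = -(a 2) / a 1 := by
            rw [← Real.exp_add, show 2 * e4 + 3 * e4 = Real.log (-(a 2) / a 1) by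
              rw [he4]; ring]
            exact Real.exp_log hr
          have key2 : exp (2 * e4) * exp (-(2 * e4)) = 1 := by
            rw [← Real.exp_add, show 2 * e4 + -(2 * e4) = 0 by ring, Real.exp_zero]
          refine ⟨0, a 0 / a 2, 0, e4, exp (2 * e4) / a 2,
            div_ne_zero (Real.exp_ne_zero _) h2, Or.inr (Or.inr (Or.inl ?_))⟩
          rw [vecMul_A]
          funext i
          fin_cases i <;> simp [h3]
          · field_simp; simp
          · have : exp (2 * e4) / a 2 * (a 1 * exp (3 * e4)) =
                exp (2 * e4) * exp (3 * e4) * a 1 / a 2 := by ring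
            rw [this, key]; field_simp; try ring
          · have : exp (2 * e4) / a 2 * (a 2 * exp (-(2 * e4))) =
                exp (2 * e4) * exp (-(2 * e4)) * (a 2 / a 2) := by ring
            rw [this, key2, div_self h2, one_mul]
        · -- same signs: target (0,1,1,0)
          set e4 : ℝ := Real.log (a 2 / a 1) / 5 with he4
          have hr : 0 < a 2 / a 1 := by
            rcases mul_pos_iff.1 hpos with ⟨hp, hq⟩ | ⟨hp, hq⟩
            · exact div_pos hq hp
            · exact div_pos_of_neg_of_neg hq hp
          have key : exp (2 * e4) * exp (3 * e4) = a 2 / a 1 := by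
            rw [← Real.exp_add, show 2 * e4 + 3 * e4 = Real.log (a 2 / a 1) by
              rw [he4]; ring]
            exact Real.exp_log hr
          have key2 : exp (2 * e4) * exp (-(2 * e4)) = 1 := by
            rw [← Real.exp_add, show 2 * e4 + -(2 * e4) = 0 by ring, Real.exp_zero]
          refine ⟨0, a 0 / a 2, 0, e4, exp (2 * e4) / a 2,
            div_ne_zero (Real.exp_ne_zero _) h2, Or.inr (Or.inl ?_)⟩
          rw [vecMul_A]
          funext i
          fin_cases i <;> simp [h3]
          · field_simp; simp
          · have : exp (2 * e4) / a 2 * (a 1 * exp (3 * e4)) =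
                exp (2 * e4) * exp (3 * e4) * a 1 / a 2 := by ring
            rw [this, key]; field_simp; try ring
          · have : exp (2 * e4) / a 2 * (a 2 * exp (-(2 * e4))) =
                exp (2 * e4) * exp (-(2 * e4)) * (a 2 / a 2) := by ring
            rw [this, key2, div_self h2, one_mul]
      · -- a₄ = 0, a₃ ≠ 0, a₂ = 0 : reduce to v₃
        refine ⟨0, a 0 / a 2, 0, 0, 1 / a 2, one_div_ne_zero h2,
          Or.inr (Or.inr (Or.inr (Or.inl ?_)))⟩
        rw [vecMul_A]
        funext i
        fin_cases i <;> simp [h3, h1, Real.exp_zero] <;> field_simp <;> simp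
    · rcases ne_or_eq (a 1) 0 with h1 | h1
      · -- only a₂ (and possibly a₁) : reduce to v₂
        refine ⟨0, 0, -(a 0) / a 1, 0, 1 / a 1, one_div_ne_zero h1,
          Or.inr (Or.inr (Or.inr (Or.inr (Or.inl ?_))))⟩
        rw [vecMul_A]
        funext i
        fin_cases i <;> simp [h3, h2, Real.exp_zero] <;> field_simp <;> simp
      · -- only a₁ : v₁
        have h0 : a 0 ≠ 0 := by
          intro h0
          apply ha
          funext i
          fin_cases i <;> assumption
        refine ⟨0, 0, 0, 0, 1 / a 0, one_div_ne_zero h0,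
          Or.inr (Or.inr (Or.inr (Or.inr (Or.inr ?_))))⟩
        rw [vecMul_A]
        funext i
        fin_cases i <;> simp [h3, h2, h1, Real.exp_zero] <;> field_simp
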